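/- Let ω be a weight and (r_k) a sequence with r_k ∈ (0,1) a maximizer of x^(k-1)/ω(x) on [0,1) for each k ≥ 2. If lim_{k→∞} r_k^(k-1) = γ > 0, then lim_{k→∞} ω(r_k)/ω(r_{k+1}) = 1. -/

import Mathlib

open Set Filter Topology

theorem weight_ratio_tendsto_one (ω : ℝ → ℝ)
    (hωc : ContinuousOn ω (Ico 0 1))
    (hωm : MonotoneOn ω (Ico 0 1))
    (hωp : ∀ x ∈ Ico (0:ℝ) 1, 0 < ω x)
    (hωu : ∀ M : ℝ, ∃ x ∈ Ico (0:ℝ) 1, M < ω x)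
    (r : ℕ → ℝ)
    (hrmem : ∀ k, 2 ≤ k → r k ∈ Ioo (0:ℝ) 1)
    (hrmax : ∀ k, 2 ≤ k → ∀ x ∈ Ico (0:ℝ) 1,
      x ^ (k - 1) / ω x ≤ (r k) ^ (k - 1) / ω (r k))
    (γ : ℝ) (hγ : 0 < γ)
    (hlim : Tendsto (fun k : ℕ => (r k) ^ (k - 1)) atTop (𝓝 γ)) :
    Tendsto (fun k : ℕ => ω (r k) / ω (r (k + 1))) atTop (𝓝 1) := by
  have hmem : ∀ k, 2 ≤ k → r k ∈ Ico (0:ℝ) 1 :=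
    fun k hk => ⟨(hrmem k hk).1.le, (hrmem k hk).2⟩
  have hωr : ∀ k, 2 ≤ k → 0 < ω (r k) := fun k hk => hωp _ (hmem k hk)
  -- r k → 1
  have hr1 : Tendsto r atTop (𝓝 1) := by
    rw [tendsto_order]
    constructor
    · intro a ha
      rcases le_or_gt a 0 with h | h
      · filter_upwards [eventually_ge_atTop 2] with k hk
        exact lt_of_le_of_lt h (hrmem k hk).1
      · have h0 : Tendsto (fun k : ℕ => a ^ (k - 1)) atTop (𝓝 0) := by
          have := tendsto_pow_atTop_nhds_zero_of_lt_one h.le ha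
          exact this.comp (tendsto_sub_atTop_nat 1)
        filter_upwards [h0.eventually_lt hlim hγ, eventually_ge_atTop 2] with k h1 hk
        exact lt_of_pow_lt_pow_left₀ (k - 1) (hmem k hk).1 h1
    · intro a ha
      filter_upwards [eventually_ge_atTop 2] with k hk
      exact (hrmem k hk).2.trans ha
  have hr1' : Tendsto (fun k : ℕ => r (k + 1)) atTop (𝓝 1) :=
    hr1.comp (tendsto_add_atTop_nat 1)
  -- r k ^ k → γ
  have hA : Tendsto (fun k : ℕ => r k ^ k) atTop (𝓝 γ) := by
    have h := hlim.mul hr1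
    rw [mul_one] at h
    refine h.congr' ?_
    filter_upwards [eventually_ge_atTop 1] with k hk
    rw [← pow_succ, Nat.sub_add_cancel hk]
  -- r (k+1) ^ k → γ
  have hB : Tendsto (fun k : ℕ => r (k + 1) ^ k) atTop (𝓝 γ) := by
    have h := hlim.comp (tendsto_add_atTop_nat 1)
    simpa [Function.comp_def] using h
  -- r (k+1) ^ (k-1) → γ
  have hC : Tendsto (fun k : ℕ => r (k + 1) ^ (k - 1)) atTop (𝓝 γ) := by
    have h := hB.div hr1' one_ne_zero
    rw [div_one] at h
    refine h.congr' ?_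
    filter_upwards [eventually_ge_atTop 2] with k hk
    have hpos : r (k + 1) ≠ 0 := ne_of_gt (hrmem (k + 1) (by omega)).1
    rw [Pi.div_apply, div_eq_iff hpos, ← pow_succ, Nat.sub_add_cancel (by omega)]
  have hL : Tendsto (fun k : ℕ => r k ^ k / r (k + 1) ^ k) atTop (𝓝 1) := by
    have := hA.div hB (ne_of_gt hγ)
    rwa [div_self (ne_of_gt hγ)] at this
  have hU : Tendsto (fun k : ℕ => r k ^ (k - 1) / r (k + 1) ^ (k - 1)) atTop (𝓝 1) := by
    have := hlim.div hC (ne_of_gt hγ)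
    rwa [div_self (ne_of_gt hγ)] at this
  refine tendsto_of_tendsto_of_tendsto_of_le_of_le' hL hU ?_ ?_
  · filter_upwards [eventually_ge_atTop 2] with k hk
    have h := hrmax (k + 1) (by omega) (r k) (hmem k hk)
    simp only [Nat.add_sub_cancel] at h
    have hω1 := hωr k hk
    have hω2 := hωr (k + 1) (by omega)
    have hp2 : (0:ℝ) < r (k + 1) ^ k := pow_pos (hrmem (k + 1) (by omega)).1 k
    rw [div_le_div_iff₀ hω1 hω2] at h
    rw [div_le_div_iff₀ hp2 hω2]
    nlinarith [h]
  · filter_upwards [eventually_ge_atTop 2] with k hk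
    have h := hrmax k hk (r (k + 1)) (hmem (k + 1) (by omega))
    have hω1 := hωr k hk
    have hω2 := hωr (k + 1) (by omega)
    have hp2 : (0:ℝ) < r (k + 1) ^ (k - 1) := pow_pos (hrmem (k + 1) (by omega)).1 _
    rw [div_le_div_iff₀ hω2 hω1] at h
    rw [div_le_div_iff₀ hω2 hp2]
    nlinarith [h]
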